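/- arXiv:2203.04123 — 2 statements merged into one kernel-verified Lean document; each statement's English description precedes it below -/
import Mathlib

section
/- With the Newton iteration v^(0) = α, v^(k+1) = v^(k) - Jac(v^(k), e)^{-1} · h(v^(k), e) as above, for every k ≥ 0 and every i = 1,...,n, one has h_i(v^(k), e) ≡ 0 modulo the ideal ⟨e_1,...,e_m⟩^{2^k} of K[[e_1,...,e_m]]. In particular, the convergence is quadratic: the number of correct coefficients doubles at each iteration. -/
open MvPolynomial

noncomputable def polyEval {K : Type*} [Field K] {n m : ℕ}
    (h : Fin n → MvPolynomial (Fin n ⊕ Fin m) K)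
    (v : Fin n → MvPowerSeries (Fin m) K) (i : Fin n) : MvPowerSeries (Fin m) K :=
  MvPolynomial.aeval (Sum.elim v (MvPowerSeries.X : Fin m → MvPowerSeries (Fin m) K)) (h i)

noncomputable def polyJac {K : Type*} [Field K] {n m : ℕ}
    (h : Fin n → MvPolynomial (Fin n ⊕ Fin m) K)
    (v : Fin n → MvPowerSeries (Fin m) K) :
    Matrix (Fin n) (Fin n) (MvPowerSeries (Fin m) K) :=
  Matrix.of fun i j =>
    MvPolynomial.aeval (Sum.elim v (MvPowerSeries.X : Fin m → MvPowerSeries (Fin m) K))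
      (MvPolynomial.pderiv (Sum.inl j) (h i))

/-- The Newton iteration `v⁽⁰⁾ = α`, `v⁽ᵏ⁺¹⁾ = v⁽ᵏ⁾ - Jac(v⁽ᵏ⁾,e)⁻¹ · h(v⁽ᵏ⁾,e)`. -/
noncomputable def newtonIter {K : Type*} [Field K] {n m : ℕ}
    (h : Fin n → MvPolynomial (Fin n ⊕ Fin m) K) (α : Fin n → K) :
    ℕ → (Fin n → MvPowerSeries (Fin m) K)
  | 0 => fun i => (MvPowerSeries.C (α i) : MvPowerSeries (Fin m) K)
  | k + 1 => fun i =>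
      newtonIter h α k i -
        ∑ j, (polyJac h (newtonIter h α k))⁻¹ i j * polyEval h (newtonIter h α k) j

section Aux

lemma mem_span_X_of_constantCoeff_eq_zero {K : Type*} [Field K] {m : ℕ}
    (f : MvPowerSeries (Fin m) K) (hf : MvPowerSeries.constantCoeff (σ := Fin m) (R := K) f = 0) :
    f ∈ Ideal.span (Set.range (MvPowerSeries.X : Fin m → MvPowerSeries (Fin m) K)) := by
  classical
  set g : Fin m → MvPowerSeries (Fin m) K := fun s d =>
    if d s ≠ 0 ∧ ∀ t, t < s → d t = 0 then MvPowerSeries.coeff d f else 0 with hg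
  have hcoeff : ∀ s d, MvPowerSeries.coeff d (g s)
      = if d s ≠ 0 ∧ ∀ t, t < s → d t = 0 then MvPowerSeries.coeff d f else 0 :=
    fun s d => rfl
  have hsum : f = ∑ s, g s := by
    ext d
    rw [map_sum]
    by_cases hd : d = 0
    · subst hd
      rw [Finset.sum_eq_zero]
      · exact hf
      · intro s _
        simp [hcoeff]
    · have hsupp : d.support.Nonempty := Finsupp.support_nonempty_iff.2 hd
      set s₀ := d.support.min' hsupp with hs₀
      have h₁ : d s₀ ≠ 0 := Finsupp.mem_support_iff.1 (d.support.min'_mem hsupp)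
      have h₂ : ∀ t, t < s₀ → d t = 0 := by
        intro t ht
        by_contra hts
        exact absurd (d.support.min'_le t (Finsupp.mem_support_iff.2 hts)) (not_le.2 ht)
      rw [Finset.sum_eq_single s₀]
      · rw [hcoeff, if_pos ⟨h₁, h₂⟩]
      · intro t _ hts
        rw [hcoeff, if_neg]
        rintro ⟨ht1, ht2⟩
        rcases lt_trichotomy t s₀ with hlt | heq | hgt
        · exact ht1 (h₂ t hlt)
        · exact hts heq
        · exact h₁ (ht2 s₀ hgt)
      · intro habs; exact absurd (Finset.mem_univ s₀) habs
  rw [hsum]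
  refine Ideal.sum_mem _ fun s _ => ?_
  have hdvd : (MvPowerSeries.X s : MvPowerSeries (Fin m) K) ∣ g s := by
    rw [MvPowerSeries.X_dvd_iff]
    intro d hds
    rw [hcoeff, if_neg]
    rintro ⟨h1, _⟩
    exact h1 hds
  obtain ⟨c, hc⟩ := hdvd
  rw [hc]
  exact Ideal.mul_mem_right _ _ (Ideal.subset_span ⟨s, rfl⟩)

lemma taylor_mem {K R : Type*} [CommRing K] [CommRing R] [Algebra K R]
    {σ : Type*} [Fintype σ] [DecidableEq σ]
    (J : Ideal R) (v w : σ → R) (hw : ∀ s, w s ∈ J) (p : MvPolynomial σ K) :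
    aeval (fun s => v s + w s) p - aeval v p
      - ∑ s, aeval v (pderiv s p) * w s ∈ J ^ 2 := by
  induction p using MvPolynomial.induction_on with
  | C a => simp
  | add p q hp hq =>
    have : aeval (fun s => v s + w s) (p + q) - aeval v (p + q)
        - ∑ s, aeval v (pderiv s (p + q)) * w s
      = (aeval (fun s => v s + w s) p - aeval v p - ∑ s, aeval v (pderiv s p) * w s)
      + (aeval (fun s => v s + w s) q - aeval v q - ∑ s, aeval v (pderiv s q) * w s) := by
      simp only [map_add, add_mul, Finset.sum_add_distrib]
      ring
    rw [this]
    exact add_mem hp hq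
  | mul_X p s hp =>
    have hweak : aeval (fun s => v s + w s) p - aeval v p ∈ J := by
      have h1 : aeval (fun s => v s + w s) p - aeval v p
          = (aeval (fun s => v s + w s) p - aeval v p - ∑ t, aeval v (pderiv t p) * w t)
            + ∑ t, aeval v (pderiv t p) * w t := by ring
      rw [h1]
      exact add_mem (Ideal.pow_le_self two_ne_zero hp)
        (Ideal.sum_mem _ fun t _ => Ideal.mul_mem_left _ _ (hw t))
    have hsum : ∀ t, aeval v (pderiv t (p * X s))
        = aeval v (pderiv t p) * v s + (if t = s then aeval v p else 0) := by
      intro t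
      rw [pderiv_mul, map_add, map_mul, map_mul, aeval_X]
      congr 1
      rcases eq_or_ne t s with rfl | hts
      · simp
      · simp [pderiv_X_of_ne (Ne.symm hts), hts]
    have key : aeval (fun s => v s + w s) (p * X s) - aeval v (p * X s)
        - ∑ t, aeval v (pderiv t (p * X s)) * w t
      = v s * (aeval (fun s => v s + w s) p - aeval v p - ∑ t, aeval v (pderiv t p) * w t)
        + w s * (aeval (fun s => v s + w s) p - aeval v p) := by
      simp only [hsum, map_mul, aeval_X, add_mul, ite_mul, zero_mul, Finset.sum_add_distrib,
        Finset.sum_ite_eq' Finset.univ s (fun t => aeval v p * w t), Finset.mem_univ, if_pos]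
      rw [show (∑ x : σ, aeval v (pderiv x p) * v s * w x)
          = v s * ∑ t, aeval v (pderiv t p) * w t by
        rw [Finset.mul_sum]; exact Finset.sum_congr rfl fun t _ => by ring]
      ring
    rw [key]
    refine add_mem (Ideal.mul_mem_left _ _ hp) ?_
    rw [pow_two]
    exact Ideal.mul_mem_mul (hw s) hweak

/-- `constantCoeff` as an algebra homomorphism. -/
noncomputable def ccAlgHom (K : Type*) [Field K] (m : ℕ) :
    MvPowerSeries (Fin m) K →ₐ[K] K :=
  { MvPowerSeries.constantCoeff (σ := Fin m) (R := K) with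
    commutes' := fun _ => MvPowerSeries.constantCoeff_C _ }

@[simp] lemma ccAlgHom_apply {K : Type*} [Field K] {m : ℕ} (f : MvPowerSeries (Fin m) K) :
    ccAlgHom K m f = MvPowerSeries.constantCoeff (σ := Fin m) (R := K) f := rfl

lemma constantCoeff_aeval {K : Type*} [Field K] {n m : ℕ}
    (v : Fin n → MvPowerSeries (Fin m) K) (p : MvPolynomial (Fin n ⊕ Fin m) K) :
    MvPowerSeries.constantCoeff (σ := Fin m) (R := K)
        (aeval (Sum.elim v (MvPowerSeries.X : Fin m → MvPowerSeries (Fin m) K)) p)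
      = aeval (Sum.elim (fun i => MvPowerSeries.constantCoeff (σ := Fin m) (R := K) (v i)) (0 : Fin m → K)) p := by
  have := congrFun (congrArg
    (fun (f : MvPolynomial (Fin n ⊕ Fin m) K →ₐ[K] K) => (f : MvPolynomial (Fin n ⊕ Fin m) K → K))
    (comp_aeval (f := Sum.elim v MvPowerSeries.X) (ccAlgHom K m))) p
  simp only [AlgHom.coe_comp, Function.comp_apply, ccAlgHom_apply] at this
  rw [this]
  have he : (fun i => MvPowerSeries.constantCoeff (σ := Fin m) (R := K) (Sum.elim v MvPowerSeries.X i))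
      = Sum.elim (fun i => MvPowerSeries.constantCoeff (σ := Fin m) (R := K) (v i)) (0 : Fin m → K) := by
    funext s
    cases s with
    | inl i => simp
    | inr t => simp [MvPowerSeries.constantCoeff_X]
  rw [he]

end Aux

theorem stmt_3 {K : Type*} [Field K] {n m : ℕ}
    (h : Fin n → MvPolynomial (Fin n ⊕ Fin m) K)
    (α : Fin n → K)
    (hroot : ∀ i, MvPolynomial.aeval (Sum.elim α (0 : Fin m → K)) (h i) = 0)
    (hjac : IsUnit (Matrix.det (Matrix.of fun i j =>
      MvPolynomial.aeval (Sum.elim α (0 : Fin m → K))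
        (MvPolynomial.pderiv (Sum.inl j) (h i))))) :
    ∀ k : ℕ, ∀ i : Fin n,
      polyEval h (newtonIter h α k) i ∈
        (Ideal.span (Set.range (MvPowerSeries.X : Fin m → MvPowerSeries (Fin m) K))) ^ (2 ^ k) := by
  classical
  set I : Ideal (MvPowerSeries (Fin m) K) :=
    Ideal.span (Set.range (MvPowerSeries.X : Fin m → MvPowerSeries (Fin m) K)) with hI
  -- constant coefficients of the iterates are α
  have hconst : ∀ k j, MvPowerSeries.constantCoeff (σ := Fin m) (R := K) (newtonIter h α k j) = α j := by
    intro k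
    induction k with
    | zero => intro j; simp [newtonIter]
    | succ k ih =>
      intro j
      show MvPowerSeries.constantCoeff (σ := Fin m) (R := K)
        (newtonIter h α k j - ∑ l, (polyJac h (newtonIter h α k))⁻¹ j l
          * polyEval h (newtonIter h α k) l) = α j
      rw [map_sub, map_sum, ih j]
      have : ∀ l, MvPowerSeries.constantCoeff (σ := Fin m) (R := K)
          ((polyJac h (newtonIter h α k))⁻¹ j l * polyEval h (newtonIter h α k) l) = 0 := by
        intro l
        rw [map_mul]
        have : MvPowerSeries.constantCoeff (σ := Fin m) (R := K) (polyEval h (newtonIter h α k) l) = 0 := by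
          rw [polyEval, constantCoeff_aeval]
          have : (fun i => MvPowerSeries.constantCoeff (σ := Fin m) (R := K) (newtonIter h α k i)) = α := by
            funext i; exact ih i
          rw [this, hroot]
        rw [this, mul_zero]
      rw [Finset.sum_eq_zero fun l _ => this l, sub_zero]
  -- the Jacobian determinant is a unit at each step
  have hdet : ∀ k, IsUnit (polyJac h (newtonIter h α k)).det := by
    intro k
    rw [MvPowerSeries.isUnit_iff_constantCoeff, RingHom.map_det]
    have : (MvPowerSeries.constantCoeff (σ := Fin m) (R := K)).mapMatrix (polyJac h (newtonIter h α k))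
        = Matrix.of fun i j => MvPolynomial.aeval (Sum.elim α (0 : Fin m → K))
            (MvPolynomial.pderiv (Sum.inl j) (h i)) := by
      ext i j
      show MvPowerSeries.constantCoeff (σ := Fin m) (R := K) (polyJac h (newtonIter h α k) i j) = _
      rw [polyJac]
      show MvPowerSeries.constantCoeff (σ := Fin m) (R := K)
        (aeval (Sum.elim (newtonIter h α k) MvPowerSeries.X) (pderiv (Sum.inl j) (h i))) = _
      rw [constantCoeff_aeval]
      have hα : (fun i => MvPowerSeries.constantCoeff (σ := Fin m) (R := K) (newtonIter h α k i)) = α := by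
        funext i'; exact hconst k i'
      rw [hα]
      rfl
    rw [this]
    exact hjac
  intro k
  induction k with
  | zero =>
    intro i
    rw [pow_zero, pow_one]
    apply mem_span_X_of_constantCoeff_eq_zero
    rw [polyEval, constantCoeff_aeval]
    have : (fun i => MvPowerSeries.constantCoeff (σ := Fin m) (R := K) (newtonIter h α 0 i)) = α := by
      funext i; exact hconst 0 i
    rw [this, hroot]
  | succ k ih =>
    intro i
    set v := newtonIter h α k with hv
    set A := polyJac h v with hA
    set E : Fin n → MvPowerSeries (Fin m) K := fun l => polyEval h v l with hE
    have hAinv : A * A⁻¹ = 1 := Matrix.mul_nonsing_inv A (hdet k)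
    set w : Fin n → MvPowerSeries (Fin m) K := fun j => -(∑ l, A⁻¹ j l * E l) with hw
    have hwJ : ∀ j, w j ∈ I ^ 2 ^ k := fun j =>
      neg_mem (Ideal.sum_mem _ fun l _ => Ideal.mul_mem_left _ _ (ih l))
    have hveq : newtonIter h α (k + 1) i = v i + w i := by
      show v i - ∑ j, A⁻¹ i j * E j = v i + w i
      rw [hw, sub_eq_add_neg]
    have hw' : ∀ s : Fin n ⊕ Fin m, Sum.elim w (0 : Fin m → MvPowerSeries (Fin m) K) s ∈ I ^ 2 ^ k := by
      rintro (j | t)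
      · exact hwJ j
      · exact zero_mem _
    have hT := taylor_mem (I ^ 2 ^ k) (Sum.elim v MvPowerSeries.X)
      (Sum.elim w (0 : Fin m → MvPowerSeries (Fin m) K)) hw' (h i)
    -- the first-order part vanishes
    have hfo : aeval (Sum.elim v MvPowerSeries.X) (h i)
        + ∑ s : Fin n ⊕ Fin m, aeval (Sum.elim v MvPowerSeries.X) (pderiv s (h i))
            * Sum.elim w (0 : Fin m → MvPowerSeries (Fin m) K) s = 0 := by
      rw [Fintype.sum_sum_type]
      simp only [Sum.elim_inl, Sum.elim_inr, Pi.zero_apply, mul_zero, Finset.sum_const_zero,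
        add_zero]
      have h1 : ∀ j, aeval (Sum.elim v MvPowerSeries.X) (pderiv (Sum.inl j) (h i)) = A i j :=
        fun j => rfl
      simp only [h1]
      have h2 : (∑ j, A i j * w j) = -(∑ l, (A * A⁻¹) i l * E l) := by
        simp only [hw, mul_neg, Finset.sum_neg_distrib]
        congr 1
        simp only [Matrix.mul_apply, Finset.sum_mul, Finset.mul_sum]
        rw [Finset.sum_comm]
        exact Finset.sum_congr rfl fun x _ => Finset.sum_congr rfl fun l _ =>
          (mul_assoc _ _ _).symm
      rw [h2, hAinv]
      have h3 : (∑ l, (1 : Matrix (Fin n) (Fin n) (MvPowerSeries (Fin m) K)) i l * E l) = E i := by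
        simp [Matrix.one_apply, Finset.sum_ite_eq]
      rw [h3]
      show E i + -E i = 0
      ring
    -- assemble
    have hveq' : ∀ j, newtonIter h α (k + 1) j = v j + w j := by
      intro j
      show v j - ∑ l, A⁻¹ j l * E l = v j + w j
      rw [hw, sub_eq_add_neg]
    have hpt : Sum.elim (newtonIter h α (k + 1)) (MvPowerSeries.X : Fin m → MvPowerSeries (Fin m) K)
        = fun s => Sum.elim v MvPowerSeries.X s
            + Sum.elim w (0 : Fin m → MvPowerSeries (Fin m) K) s := by
      funext s
      cases s with
      | inl j => simpa using hveq' j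
      | inr t => simp
    have hgoal : polyEval h (newtonIter h α (k + 1)) i
        = (aeval fun s => Sum.elim v MvPowerSeries.X s
              + Sum.elim w (0 : Fin m → MvPowerSeries (Fin m) K) s) (h i)
          - aeval (Sum.elim v MvPowerSeries.X) (h i)
          - ∑ s : Fin n ⊕ Fin m, aeval (Sum.elim v MvPowerSeries.X) (pderiv s (h i))
              * Sum.elim w (0 : Fin m → MvPowerSeries (Fin m) K) s := by
      rw [polyEval, hpt]
      linear_combination hfo
    rw [hgoal, pow_succ, pow_mul]
    exact hT
end

section
/- Let K be a field, h ∈ K[x_1,...,x_n, e_1,...,e_m]^n, α a root of h(x,0) with invertible Jacobian of h(x,0) w.r.t. x at α, and let v, w ∈ K[[e_1,...,e_m]]^n both satisfy v(0)=w(0)=α and h(v,e)=h(w,e)=0. Then v = w. (Uniqueness part of the Hensel lifting.) -/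
open MvPolynomial

lemma taylor1 {K R : Type*} [CommRing K] [CommRing R] [Algebra K R] {σ : Type*} [Fintype σ]
    [DecidableEq σ] (p : MvPolynomial σ K) (u δ : σ → R) :
    aeval (u + δ) p - aeval u p - ∑ j, aeval u (pderiv j p) * δ j
      ∈ Ideal.span (Set.range fun jk : σ × σ => δ jk.1 * δ jk.2) := by
  set I := Ideal.span (Set.range fun jk : σ × σ => δ jk.1 * δ jk.2) with hI
  have hmem : ∀ j k : σ, δ j * δ k ∈ I := fun j k =>
    Ideal.subset_span ⟨(j, k), rfl⟩
  induction p using MvPolynomial.induction_on with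
  | C a => simp
  | add p q hp hq =>
    have := I.add_mem hp hq
    convert this using 1
    simp only [map_add, add_mul, Finset.sum_add_distrib]
    ring
  | mul_X p j ih =>
    have key : (aeval (u + δ) (p * X j) - aeval u (p * X j)
        - ∑ k, aeval u (pderiv k (p * X j)) * δ k)
        = (aeval (u + δ) p - aeval u p - ∑ k, aeval u (pderiv k p) * δ k) * (u j + δ j)
          + (∑ k, aeval u (pderiv k p) * δ k) * δ j := by
      simp only [map_mul, aeval_X, Pi.add_apply, pderiv_mul, pderiv_X, map_add,
        Pi.single_apply]
      simp only [add_mul, Finset.sum_add_distrib, apply_ite (aeval u), map_one, map_zero,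
        ite_mul, one_mul, zero_mul, mul_ite, mul_one, mul_zero]
      rw [Finset.sum_ite_eq (Finset.univ : Finset σ) j (fun k => aeval u p * δ k)]
      simp only [Finset.mem_univ, if_true]
      have hs : ∑ x : σ, aeval u (pderiv x p) * u j * δ x
          = (∑ x : σ, aeval u (pderiv x p) * δ x) * u j := by
        rw [Finset.sum_mul]; exact Finset.sum_congr rfl fun x _ => by ring
      rw [hs]; ring
    rw [key]
    refine I.add_mem (I.mul_mem_right _ ih) ?_
    rw [Finset.sum_mul]
    refine I.sum_mem fun k _ => ?_
    rw [mul_assoc]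
    exact I.mul_mem_left _ (hmem k j)

lemma deg_add {σ : Type*} (a b : σ →₀ ℕ) :
    Finsupp.degree (a + b) = Finsupp.degree a + Finsupp.degree b := by
  simp [Finsupp.degree_eq_weight_one, map_add]

noncomputable def ccAlg (σ K : Type*) [CommSemiring K] : MvPowerSeries σ K →ₐ[K] K :=
  { (MvPowerSeries.constantCoeff : MvPowerSeries σ K →+* K) with
    commutes' := fun a => by simp [MvPowerSeries.algebraMap_apply] }

lemma ccAlg_apply {σ K : Type*} [CommSemiring K] (f : MvPowerSeries σ K) :
    ccAlg σ K f = MvPowerSeries.constantCoeff f := rfl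

lemma cc_aeval {σ τ K : Type*} [CommSemiring K] (g : τ → MvPowerSeries σ K)
    (p : MvPolynomial τ K) :
    MvPowerSeries.constantCoeff (aeval g p)
      = aeval (fun t => MvPowerSeries.constantCoeff (g t)) p := by
  have := MvPolynomial.comp_aeval (φ := ccAlg σ K) (f := g)
  have h2 := congrArg (fun ψ => ψ p) this
  simpa [ccAlg_apply] using h2

noncomputable def lowIdeal (σ K : Type*) [CommRing K] (c : ℕ) :
    Ideal (MvPowerSeries σ K) where
  carrier := {f | ∀ s : σ →₀ ℕ, Finsupp.degree s < c → MvPowerSeries.coeff s f = 0}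
  zero_mem' := by simp
  add_mem' := by
    intro a b ha hb s hs
    simp [map_add, ha s hs, hb s hs]
  smul_mem' := by
    classical
    intro a f hf s hs
    simp only [smul_eq_mul, Set.mem_setOf_eq]
    rw [MvPowerSeries.coeff_mul]
    refine Finset.sum_eq_zero fun p hp => ?_
    rw [Finset.HasAntidiagonal.mem_antidiagonal] at hp
    have : Finsupp.degree p.2 < c := by
      have := deg_add p.1 p.2
      rw [hp] at this
      omega
    rw [hf p.2 this, mul_zero]

lemma coeff_mul_low {σ K : Type*} [CommRing K] [DecidableEq σ] (a f : MvPowerSeries σ K)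
    (s : σ →₀ ℕ) (hf : ∀ t : σ →₀ ℕ, Finsupp.degree t < Finsupp.degree s →
      MvPowerSeries.coeff t f = 0) :
    MvPowerSeries.coeff s (a * f)
      = MvPowerSeries.constantCoeff a * MvPowerSeries.coeff s f := by
  rw [MvPowerSeries.coeff_mul]
  rw [Finset.sum_eq_single (0, s)]
  · simp [MvPowerSeries.coeff_zero_eq_constantCoeff]
  · intro p hp hne
    rw [Finset.HasAntidiagonal.mem_antidiagonal] at hp
    have h1 : p.1 ≠ 0 := by
      rintro h0
      apply hne
      rw [h0, zero_add] at hp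
      rw [Prod.ext_iff]
      exact ⟨h0, hp⟩
    have hd1 : Finsupp.degree p.1 ≠ 0 := fun h => h1 ((Finsupp.degree_eq_zero_iff _).mp h)
    have : Finsupp.degree p.2 < Finsupp.degree s := by
      have := deg_add p.1 p.2
      rw [hp] at this
      omega
    rw [hf p.2 this, mul_zero]
  · intro hni
    simp [Finset.mem_antidiagonal] at hni

theorem stmt_17 {K : Type*} [Field K] {n m : ℕ}
    (h : Fin n → MvPolynomial (Fin n ⊕ Fin m) K)
    (α : Fin n → K)
    (hroot : ∀ i, MvPolynomial.aeval (Sum.elim α (0 : Fin m → K)) (h i) = 0)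
    (hjac : IsUnit (Matrix.det (Matrix.of fun i j =>
      MvPolynomial.aeval (Sum.elim α (0 : Fin m → K))
        (MvPolynomial.pderiv (Sum.inl j) (h i)))))
    (v w : Fin n → MvPowerSeries (Fin m) K)
    (hv0 : ∀ i, MvPowerSeries.constantCoeff (v i) = α i)
    (hw0 : ∀ i, MvPowerSeries.constantCoeff (w i) = α i)
    (hv : ∀ i, MvPolynomial.aeval
      (Sum.elim v (MvPowerSeries.X : Fin m → MvPowerSeries (Fin m) K)) (h i) = 0)
    (hw : ∀ i, MvPolynomial.aeval
      (Sum.elim w (MvPowerSeries.X : Fin m → MvPowerSeries (Fin m) K)) (h i) = 0) :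
    v = w := by
  classical
  set u : Fin n ⊕ Fin m → MvPowerSeries (Fin m) K := Sum.elim v (MvPowerSeries.X) with hu
  set δ : Fin n ⊕ Fin m → MvPowerSeries (Fin m) K := Sum.elim (fun j => w j - v j) 0 with hδ
  have huδ : Sum.elim w (MvPowerSeries.X : Fin m → MvPowerSeries (Fin m) K) = u + δ := by
    funext jk
    cases jk with
    | inl j => simp [hu, hδ]
    | inr j => simp [hu, hδ]
  set M : Matrix (Fin n) (Fin n) K := Matrix.of fun i j =>
      MvPolynomial.aeval (Sum.elim α (0 : Fin m → K))
        (MvPolynomial.pderiv (Sum.inl j) (h i)) with hM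
  have hcc : (fun t => MvPowerSeries.constantCoeff (u t)) = Sum.elim α 0 := by
    funext t
    cases t with
    | inl j => simp [hu, hv0]
    | inr j => simp [hu]
  -- the key induction
  have key : ∀ N : ℕ, ∀ i, ∀ s : Fin m →₀ ℕ, Finsupp.degree s < N →
      MvPowerSeries.coeff s (w i - v i) = 0 := by
    intro N
    induction N with
    | zero => intro i s hs; omega
    | succ N ih =>
      intro i s hs
      rcases Nat.lt_or_ge (Finsupp.degree s) N with hlt | hge
      · exact ih i s hlt
      have hdeg : Finsupp.degree s = N := by omega
      rcases Nat.eq_zero_or_pos N with hN0 | hNpos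
      · have hs0 : s = 0 := (Finsupp.degree_eq_zero_iff s).mp (by omega)
        rw [hs0, MvPowerSeries.coeff_zero_eq_constantCoeff, map_sub, hv0, hw0, sub_self]
      -- main case : N ≥ 1
      set d : Fin n → K := fun j => MvPowerSeries.coeff s (w j - v j) with hd
      have hlow : ∀ j : Fin n, ∀ t : Fin m →₀ ℕ, Finsupp.degree t < N →
          MvPowerSeries.coeff t (w j - v j) = 0 := fun j t ht => ih j t ht
      -- generators are in lowIdeal (N+1)
      have hIlow : Ideal.span (Set.range fun jk : (Fin n ⊕ Fin m) × (Fin n ⊕ Fin m) =>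
          δ jk.1 * δ jk.2) ≤ lowIdeal (Fin m) K (N + 1) := by
        rw [Ideal.span_le]
        rintro _ ⟨⟨a, b⟩, rfl⟩
        cases a with
        | inr ja => simp only [hδ, Sum.elim_inr, Pi.zero_apply, zero_mul]
                    exact (lowIdeal (Fin m) K (N+1)).zero_mem
        | inl ja =>
          cases b with
          | inr jb => simp only [hδ, Sum.elim_inr, Pi.zero_apply, mul_zero]
                      exact (lowIdeal (Fin m) K (N+1)).zero_mem
          | inl jb =>
            intro t ht
            rw [MvPowerSeries.coeff_mul]
            refine Finset.sum_eq_zero fun p hp => ?_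
            rw [Finset.HasAntidiagonal.mem_antidiagonal] at hp
            have hsum := deg_add p.1 p.2
            rw [hp] at hsum
            rcases Nat.lt_or_ge (Finsupp.degree p.1) N with h1 | h1
            · rw [show δ (Sum.inl ja) = w ja - v ja from rfl, hlow ja p.1 h1, zero_mul]
            · have h2 : Finsupp.degree p.2 < N := by omega
              rw [show δ (Sum.inl jb) = w jb - v jb from rfl, hlow jb p.2 h2, mul_zero]
      -- linear relation for each i
      have hlin : ∀ i : Fin n, ∑ j : Fin n, M i j * d j = 0 := by
        intro i
        have htay := taylor1 (h i) u δ
        rw [← huδ, hw i, hv i] at htay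
        have hsum : ∑ jk : Fin n ⊕ Fin m, MvPolynomial.aeval u (MvPolynomial.pderiv jk (h i)) * δ jk
            = ∑ j : Fin n, MvPolynomial.aeval u (MvPolynomial.pderiv (Sum.inl j) (h i)) * (w j - v j) := by
          rw [Fintype.sum_sum_type]
          simp [hδ]
        rw [hsum] at htay
        have hmem : (∑ j : Fin n, MvPolynomial.aeval u (MvPolynomial.pderiv (Sum.inl j) (h i)) * (w j - v j))
            ∈ lowIdeal (Fin m) K (N + 1) := by
          have := hIlow htay
          have h0 : (0:MvPowerSeries (Fin m) K) - 0 - ∑ j : Fin n, MvPolynomial.aeval u (MvPolynomial.pderiv (Sum.inl j) (h i)) * (w j - v j)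
              = -(∑ j : Fin n, MvPolynomial.aeval u (MvPolynomial.pderiv (Sum.inl j) (h i)) * (w j - v j)) := by ring
          rw [h0] at this
          simpa using (lowIdeal (Fin m) K (N+1)).neg_mem this
        have hcoeff := hmem s (by omega)
        rw [map_sum] at hcoeff
        have heach : ∀ j : Fin n, MvPowerSeries.coeff s
            (MvPolynomial.aeval u (MvPolynomial.pderiv (Sum.inl j) (h i)) * (w j - v j))
            = M i j * d j := by
          intro j
          rw [coeff_mul_low _ _ s (by rw [hdeg]; exact hlow j)]
          congr 1
          rw [cc_aeval, hcc]
          rfl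
        rw [Finset.sum_congr rfl fun j _ => heach j] at hcoeff
        exact hcoeff
      -- matrix argument
      have hd0 : d = 0 := by
        have hmv : M.mulVec d = 0 := by
          funext i
          rw [Matrix.mulVec, dotProduct]
          exact hlin i
        have := congrArg (fun x => M⁻¹.mulVec x) hmv
        simpa [Matrix.mulVec_mulVec, Matrix.nonsing_inv_mul M hjac] using this
      have := congrFun hd0 i
      simpa [hd] using this
  funext i
  ext s
  have h1 := key (Finsupp.degree s + 1) i s (by omega)
  have h2 : MvPowerSeries.coeff s (w i) - MvPowerSeries.coeff s (v i) = 0 := by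
    rw [← map_sub]; exact h1
  exact (sub_eq_zero.mp h2).symm
end
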